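/- arXiv:math/0512185 — 3 statements merged into one kernel-verified Lean document; each statement's English description precedes it below -/
import Mathlib

section
/- The function z ↦ -log((log ‖z‖²)²) is strictly plurisubharmonic on the open set {z ∈ ℂⁿ : 0 < ‖z‖ < 1}, i.e., its complex Hessian ∑_{j,k} ∂²u/∂z_j∂z̄_k w_j w̄_k is positive definite at every point of this set. -/
open Complex

private lemma lemA (a b d : ℝ) (ha0 : 0 < a) (ha1 : a < 1) :
    deriv^[2] (fun t : ℝ => -Real.log ((Real.log (a + b * t + d * t ^ 2)) ^ 2)) 0
      = -(2 * ((2 * d * (a * Real.log a) - b * (b * (Real.log a + 1))) / (a * Real.log a) ^ 2)) := by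
  set F : ℝ → ℝ := fun t => a + b * t + d * t ^ 2 with hF
  have hFd : ∀ t : ℝ, HasDerivAt F (b + 2 * d * t) t := by
    intro t
    have h1 : HasDerivAt (fun t : ℝ => a + b * t + d * t ^ 2)
        (0 + b * 1 + d * (↑2 * t ^ 1)) t :=
      (((hasDerivAt_const t a).add ((hasDerivAt_id t).const_mul b)).add
        ((hasDerivAt_pow 2 t).const_mul d))
    convert h1 using 1
    push_cast; ring
  have hFc : Continuous F := by fun_prop
  set s : Set ℝ := F ⁻¹' Set.Ioo 0 1 with hs_def
  have hs : IsOpen s := isOpen_Ioo.preimage hFc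
  have hF0 : F 0 = a := by simp [hF]
  have h0s : (0 : ℝ) ∈ s := by
    simp only [hs_def, Set.mem_preimage, hF0, Set.mem_Ioo]
    exact ⟨ha0, ha1⟩
  have hgeq : (fun t : ℝ => -Real.log ((Real.log (a + b * t + d * t ^ 2)) ^ 2))
      = fun t : ℝ => -(2 * Real.log (Real.log (F t))) := by
    funext t
    rw [Real.log_pow]
    simp only [hF]
    push_cast; ring_nf
  rw [hgeq]
  set g : ℝ → ℝ := fun t : ℝ => -(2 * Real.log (Real.log (F t))) with hg
  set G : ℝ → ℝ := fun t : ℝ => -(2 * ((b + 2 * d * t) / (F t * Real.log (F t)))) with hG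
  have hmem : ∀ t ∈ s, 0 < F t ∧ F t < 1 := fun t ht => ⟨ht.1, ht.2⟩
  have hderiv : ∀ t ∈ s, HasDerivAt g (G t) t := by
    intro t ht
    obtain ⟨h1, h2⟩ := hmem t ht
    have hne : F t ≠ 0 := ne_of_gt h1
    have hlne : Real.log (F t) ≠ 0 := ne_of_lt (Real.log_neg h1 h2)
    have : HasDerivAt g _ t := ((((hFd t).log hne).log hlne).const_mul 2).neg
    convert this using 1
    show -(2 * ((b + 2 * d * t) / (F t * Real.log (F t)))) = _
    rw [div_div]
  have hev : deriv g =ᶠ[nhds 0] G := by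
    filter_upwards [hs.mem_nhds h0s] with t ht
    exact (hderiv t ht).deriv
  show deriv (deriv g) 0 = _
  rw [hev.deriv_eq]
  have h1 : (0:ℝ) < F 0 := hF0 ▸ ha0
  have h2 : F 0 < 1 := hF0 ▸ ha1
  have hne : F 0 ≠ 0 := ne_of_gt h1
  have hlne : Real.log (F 0) ≠ 0 := ne_of_lt (Real.log_neg h1 h2)
  have hN : HasDerivAt (fun t : ℝ => b + 2 * d * t) (2 * d) 0 := by
    have := ((hasDerivAt_id (0:ℝ)).const_mul (2*d)).const_add b
    simpa using this
  have hlog0 : HasDerivAt (fun t => Real.log (F t)) ((b + 2 * d * 0) / F 0) 0 :=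
    (hFd 0).log hne
  have hD : HasDerivAt (fun t => F t * Real.log (F t))
      ((b + 2 * d * 0) * Real.log (F 0) + F 0 * ((b + 2 * d * 0) / F 0)) 0 :=
    (hFd 0).mul hlog0
  have hDne : F 0 * Real.log (F 0) ≠ 0 := mul_ne_zero hne hlne
  have hdiv := (hN.div hD hDne)
  have hG0 := ((hdiv.const_mul 2).neg).deriv
  replace hG0 : deriv G 0 = _ := hG0
  rw [hG0, hF0]
  have hane : a ≠ 0 := ne_of_gt ha0
  field_simp
  ring

private lemma normsq1 (n : ℕ) (z w : EuclideanSpace ℂ (Fin n)) (t : ℝ) :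
    ‖z + (t : ℂ) • w‖ ^ 2
      = ‖z‖^2 + (2 * (inner ℂ z w : ℂ).re) * t + ‖w‖^2 * t^2 := by
  rw [@norm_add_sq ℂ]
  simp only [inner_smul_right, RCLike.re_to_complex, norm_smul, Complex.norm_real,
    Real.norm_eq_abs, Complex.mul_re, Complex.ofReal_re, Complex.ofReal_im, mul_pow, sq_abs]
  ring

private lemma normsq2 (n : ℕ) (z w : EuclideanSpace ℂ (Fin n)) (t : ℝ) :
    ‖z + ((t : ℂ) * Complex.I) • w‖ ^ 2
      = ‖z‖^2 + (-2 * (inner ℂ z w : ℂ).im) * t + ‖w‖^2 * t^2 := by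
  rw [@norm_add_sq ℂ]
  simp only [inner_smul_right, RCLike.re_to_complex, norm_smul, norm_mul, Complex.norm_real,
    Complex.norm_I, Real.norm_eq_abs, Complex.mul_re, Complex.mul_im, Complex.I_re, Complex.I_im,
    Complex.ofReal_re, Complex.ofReal_im, mul_pow, sq_abs]
  ring

/-- the function `u z = -log((log ‖z‖²)²)` is strictly plurisubharmonic on
`{z : 0 < ‖z‖ < 1}` in `ℂⁿ`: its Levi form, expressed as one quarter of the Laplacian of
the restriction `τ ↦ u (z + τ • w)` to the complex line through `z` in direction `w`,
is strictly positive for every `w ≠ 0`. -/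
theorem stmt1 (n : ℕ) (u : EuclideanSpace ℂ (Fin n) → ℝ)
    (hu : ∀ z, u z = -Real.log ((Real.log (‖z‖ ^ 2)) ^ 2))
    (z w : EuclideanSpace ℂ (Fin n)) (hz0 : 0 < ‖z‖) (hz1 : ‖z‖ < 1) (hw : w ≠ 0) :
    0 < (1 / 4 : ℝ) *
      (deriv^[2] (fun t : ℝ => u (z + (t : ℂ) • w)) 0 +
       deriv^[2] (fun t : ℝ => u (z + ((t : ℂ) * Complex.I) • w)) 0) := by
  set a : ℝ := ‖z‖^2 with ha_def
  set d : ℝ := ‖w‖^2 with hd_def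
  set c : ℂ := (inner ℂ z w : ℂ) with hc_def
  have ha0 : 0 < a := by positivity
  have ha1 : a < 1 := by
    have := pow_lt_one₀ (norm_nonneg z) hz1 (two_ne_zero)
    simpa [ha_def] using this
  have hwn : 0 < ‖w‖ := norm_pos_iff.mpr hw
  have hd0 : 0 < d := by positivity
  have e1 : (fun t : ℝ => u (z + (t : ℂ) • w))
      = fun t : ℝ => -Real.log ((Real.log (a + (2 * c.re) * t + d * t ^ 2)) ^ 2) := by
    funext t
    rw [hu, ← normsq1]
  have e2 : (fun t : ℝ => u (z + ((t : ℂ) * Complex.I) • w))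
      = fun t : ℝ => -Real.log ((Real.log (a + (-2 * c.im) * t + d * t ^ 2)) ^ 2) := by
    funext t
    rw [hu, ← normsq2]
  rw [e1, e2, lemA a (2 * c.re) d ha0 ha1, lemA a (-2 * c.im) d ha0 ha1]
  set L : ℝ := Real.log a with hL_def
  have hL : L < 0 := Real.log_neg ha0 ha1
  have hden : 0 < (a * L) ^ 2 :=
    pow_two_pos_of_ne_zero (mul_ne_zero (ne_of_gt ha0) (ne_of_lt hL))
  have hcs : (2 * c.re) ^ 2 + (-2 * c.im) ^ 2 ≤ 4 * (a * d) := by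
    have h1 : ‖c‖ ≤ ‖z‖ * ‖w‖ := norm_inner_le_norm z w
    have h2 : ‖c‖ ^ 2 ≤ a * d := by
      rw [ha_def, hd_def]
      nlinarith [norm_nonneg c, norm_nonneg z, norm_nonneg w]
    have h3 : c.re ^ 2 + c.im ^ 2 = ‖c‖ ^ 2 := by
      rw [← Complex.normSq_eq_norm_sq, Complex.normSq_apply]; ring
    nlinarith
  set m : ℝ := (2 * c.re) ^ 2 + (-2 * c.im) ^ 2 with hm_def
  have hm0 : 0 ≤ m := by positivity
  have key : 4 * d * a * L - m * L - m < 0 := by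
    rcases eq_or_lt_of_le hm0 with hm | hm
    · have h4 : 0 < 4 * d * a := by positivity
      nlinarith
    · nlinarith [mul_nonneg (le_of_lt (neg_pos.mpr hL)) (sub_nonneg.mpr hcs)]
  have hsum : -(2 * ((2 * d * (a * L) - 2 * c.re * (2 * c.re * (L + 1))) / (a * L) ^ 2))
      + -(2 * ((2 * d * (a * L) - -2 * c.im * (-2 * c.im * (L + 1))) / (a * L) ^ 2))
      = (-(4 * d * a * L - m * L - m) * 2) / (a * L) ^ 2 := by
    rw [hm_def]; ring
  rw [hsum]
  have : 0 < (-(4 * d * a * L - m * L - m) * 2) / (a * L) ^ 2 := by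
    apply div_pos _ hden
    nlinarith
  linarith
end

section
/- Let Ω ⊆ ℂⁿ be open, F : Ω → ℂ holomorphic, and suppose ∫_Ω |F(w)|² · exp(1/dist(w, ∂Ω)) dV(w) ≤ A < ∞. Then for every boundary point y ∈ ∂Ω, lim_{z → y, z ∈ Ω} F(z) = 0. -/
open MeasureTheory

open Metric Filter Set
open scoped Real ENNReal

lemma circle_mean (f : ℂ → ℂ) (c : ℂ) (s : ℝ) (hs : 0 < s)
    (hf : DifferentiableOn ℂ f (closedBall c s)) :
    2 * Real.pi * ‖f c‖ ≤ ∫ θ in (0:ℝ)..(2*Real.pi), ‖f (circleMap c s θ)‖ := by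
  have h := hf.circleIntegral_sub_inv_smul (mem_ball_self hs)
  have h2 : ‖∮ z in C(c, s), (z - c)⁻¹ • f z‖ = 2 * Real.pi * ‖f c‖ := by
    rw [h, norm_smul]
    congr 1
    simp [Real.pi_nonneg, abs_of_nonneg]
  have h3 : ‖∮ z in C(c, s), (z - c)⁻¹ • f z‖
      ≤ ∫ θ in (0:ℝ)..(2*Real.pi), ‖deriv (circleMap c s) θ • (circleMap c s θ - c)⁻¹ • f (circleMap c s θ)‖ :=
    intervalIntegral.norm_integral_le_integral_norm (by positivity)
  rw [h2] at h3
  refine h3.trans_eq (intervalIntegral.integral_congr fun θ _ => ?_)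
  rw [deriv_circleMap, circleMap_sub_center, norm_smul, norm_smul, norm_inv]
  have : ‖circleMap 0 s θ‖ = s := by
    simp [abs_of_pos hs]
  simp only [norm_mul, this, Complex.norm_I, mul_one]
  field_simp

lemma disc_mean_real (f : ℂ → ℂ) (c : ℂ) (r : ℝ) (hr : 0 < r)
    (hf : DifferentiableOn ℂ f (closedBall c r)) :
    ‖f c‖ * (Real.pi * r ^ 2) ≤ ∫ w in ball c r, ‖f w‖ := by
  have hcont : ContinuousOn f (closedBall c r) := hf.continuousOn
  set Ψ : ℝ × ℝ → ℝ := fun p => p.1 * ‖f (circleMap c p.1 p.2)‖ with hΨdef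
  have hcm : Continuous fun p : ℝ × ℝ => circleMap c p.1 p.2 := by
    unfold circleMap; fun_prop
  have hmaps : MapsTo (fun p : ℝ × ℝ => circleMap c p.1 p.2)
      (Icc 0 r ×ˢ Icc (-Real.pi) Real.pi) (closedBall c r) := by
    intro p hp
    exact closedBall_subset_closedBall hp.1.2 (circleMap_mem_closedBall c hp.1.1 p.2)
  have hΨcont : ContinuousOn Ψ (Icc 0 r ×ˢ Icc (-Real.pi) Real.pi) :=
    continuous_fst.continuousOn.mul ((hcont.comp hcm.continuousOn hmaps).norm)
  have hΨint : IntegrableOn Ψ (Icc 0 r ×ˢ Icc (-Real.pi) Real.pi) :=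
    hΨcont.integrableOn_compact (isCompact_Icc.prod isCompact_Icc)
  have hS : IntegrableOn Ψ (Ioo 0 r ×ˢ Ioo (-Real.pi) Real.pi) :=
    hΨint.mono_set (prod_mono Ioo_subset_Icc_self Ioo_subset_Icc_self)
  have hS' : Integrable Ψ
      ((volume.restrict (Ioo 0 r)).prod (volume.restrict (Ioo (-Real.pi) Real.pi))) := by
    rw [Measure.prod_restrict]
    rw [← Measure.volume_eq_prod]
    exact hS
  set G : ℂ → ℝ := (ball (0:ℂ) r).indicator fun z => ‖f (c + z)‖ with hGdef
  have E1 : ∫ w in ball c r, ‖f w‖ = ∫ z, G z := by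
    rw [← integral_indicator measurableSet_ball,
      ← integral_add_left_eq_self ((ball c r).indicator fun w => ‖f w‖) c]
    refine integral_congr_ae (ae_of_all _ fun z => ?_)
    show (ball c r).indicator (fun w => ‖f w‖) (c + z)
        = (ball (0:ℂ) r).indicator (fun z => ‖f (c + z)‖) z
    have hiff : c + z ∈ ball c r ↔ z ∈ ball (0:ℂ) r := by
      simp [mem_ball, dist_eq_norm]
    by_cases hz : z ∈ ball (0:ℂ) r
    · rw [indicator_of_mem (hiff.mpr hz), indicator_of_mem hz]
    · rw [indicator_of_notMem (fun h => hz (hiff.mp h)), indicator_of_notMem hz]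
  have hcirc : ∀ p : ℝ × ℝ, c + Complex.polarCoord.symm p = circleMap c p.1 p.2 := by
    intro p
    rw [Complex.polarCoord_symm_apply]
    simp [circleMap, Complex.exp_mul_I, Complex.ofReal_cos, Complex.ofReal_sin]
  have E2 : ∫ z, G z = ∫ p in polarCoord.target, p.1 • G (Complex.polarCoord.symm p) :=
    (Complex.integral_comp_polarCoord_symm G).symm
  have E3 : ∫ p in polarCoord.target, p.1 • G (Complex.polarCoord.symm p)
      = ∫ p in polarCoord.target, (Ioo 0 r ×ˢ Ioo (-Real.pi) Real.pi).indicator Ψ p := by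
    refine setIntegral_congr_fun polarCoord.open_target.measurableSet fun p hp => ?_
    have hp1 : 0 < p.1 := hp.1
    by_cases hlt : p.1 < r
    · have hmem : Complex.polarCoord.symm p ∈ ball (0:ℂ) r := by
        rw [mem_ball_zero_iff]
        rw [Complex.norm_polarCoord_symm, abs_of_pos hp1]
        exact hlt
      have hmemS : p ∈ Ioo 0 r ×ˢ Ioo (-Real.pi) Real.pi := ⟨⟨hp1, hlt⟩, hp.2⟩
      rw [indicator_of_mem hmemS, hGdef, indicator_of_mem hmem, smul_eq_mul, hcirc]
    · have hmem : Complex.polarCoord.symm p ∉ ball (0:ℂ) r := by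
        rw [mem_ball_zero_iff, Complex.norm_polarCoord_symm,
          abs_of_pos hp1]
        exact fun h => hlt h
      have hmemS : p ∉ Ioo 0 r ×ˢ Ioo (-Real.pi) Real.pi := fun h => hlt h.1.2
      rw [indicator_of_notMem hmemS, hGdef, indicator_of_notMem hmem, smul_zero]
  have E4 : ∫ p in polarCoord.target, (Ioo 0 r ×ˢ Ioo (-Real.pi) Real.pi).indicator Ψ p
      = ∫ p in Ioo 0 r ×ˢ Ioo (-Real.pi) Real.pi, Ψ p := by
    rw [setIntegral_indicator (measurableSet_Ioo.prod measurableSet_Ioo)]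
    congr 1
    rw [inter_eq_self_of_subset_right]
    exact fun p hp => ⟨Ioo_subset_Ioi_self hp.1, hp.2⟩
  have E5 : ∫ p in Ioo 0 r ×ˢ Ioo (-Real.pi) Real.pi, Ψ p
      = ∫ x in Ioo 0 r, ∫ y in Ioo (-Real.pi) Real.pi, Ψ (x, y) := by
    rw [Measure.volume_eq_prod, ← Measure.prod_restrict]
    exact integral_prod Ψ hS'
  -- inner estimate
  have inner_est : ∀ x ∈ Ioo 0 r,
      x * (2 * Real.pi * ‖f c‖) ≤ ∫ y in Ioo (-Real.pi) Real.pi, Ψ (x, y) := by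
    intro x hx
    have key : ∫ y in Ioo (-Real.pi) Real.pi, ‖f (circleMap c x y)‖
        = ∫ θ in (0:ℝ)..(2*Real.pi), ‖f (circleMap c x θ)‖ := by
      have per : Function.Periodic (fun θ => ‖f (circleMap c x θ)‖) (2*Real.pi) := by
        intro θ
        simp [periodic_circleMap c x θ]
      have hper := per.intervalIntegral_add_eq (-Real.pi) 0
      rw [show -Real.pi + 2*Real.pi = Real.pi by ring, zero_add] at hper
      rw [← integral_Ioc_eq_integral_Ioo,
        ← intervalIntegral.integral_of_le (by linarith [Real.pi_pos] : -Real.pi ≤ Real.pi)]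
      exact hper
    have hmean := circle_mean f c x hx.1 (hf.mono (closedBall_subset_closedBall hx.2.le))
    have : ∫ y in Ioo (-Real.pi) Real.pi, Ψ (x, y)
        = x * ∫ y in Ioo (-Real.pi) Real.pi, ‖f (circleMap c x y)‖ := by
      simp only [hΨdef]
      exact integral_const_mul x _
    rw [this, key]
    exact mul_le_mul_of_nonneg_left hmean hx.1.le
  have E6 : ∫ x in Ioo 0 r, x * (2 * Real.pi * ‖f c‖)
      ≤ ∫ x in Ioo 0 r, ∫ y in Ioo (-Real.pi) Real.pi, Ψ (x, y) := by
    refine setIntegral_mono_on ?_ ?_ measurableSet_Ioo inner_est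
    · exact ((continuous_id.mul continuous_const).integrableOn_Icc).mono_set Ioo_subset_Icc_self
    · exact hS'.integral_prod_left
  have E7 : ∫ x in Ioo 0 r, x * (2 * Real.pi * ‖f c‖)
      = (r^2/2) * (2 * Real.pi * ‖f c‖) := by
    rw [integral_mul_const]
    congr 1
    rw [← integral_Ioc_eq_integral_Ioo, ← intervalIntegral.integral_of_le hr.le,
      integral_id]
    ring
  rw [E1, E2, E3, E4, E5]
  calc ‖f c‖ * (Real.pi * r ^ 2) = (r^2/2) * (2 * Real.pi * ‖f c‖) := by ring
  _ = ∫ x in Ioo 0 r, x * (2 * Real.pi * ‖f c‖) := E7.symm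
  _ ≤ _ := E6

lemma disc_mean (f : ℂ → ℂ) (c : ℂ) (r : ℝ) (hr : 0 < r)
    (hf : DifferentiableOn ℂ f (closedBall c r)) :
    ENNReal.ofReal ‖f c‖ * volume (ball c r) ≤ ∫⁻ w in ball c r, ENNReal.ofReal ‖f w‖ := by
  have hint : IntegrableOn (fun w => ‖f w‖) (ball c r) :=
    (hf.continuousOn.norm.integrableOn_compact (isCompact_closedBall c r)).mono_set
      ball_subset_closedBall
  rw [← ofReal_integral_eq_lintegral_ofReal hint (ae_of_all _ fun w => norm_nonneg _)]
  have hvol : volume (ball c r) = ENNReal.ofReal (Real.pi * r ^ 2) := by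
    rw [Complex.volume_ball, ENNReal.ofReal_mul Real.pi_nonneg, ENNReal.ofReal_pow hr.le,
      ← NNReal.coe_real_pi, ENNReal.ofReal_coe_nnreal, mul_comm]
  rw [hvol, ← ENNReal.ofReal_mul (norm_nonneg _)]
  exact ENNReal.ofReal_le_ofReal (disc_mean_real f c r hr hf)

lemma polydisc_mean : ∀ (n : ℕ) (F : (Fin n → ℂ) → ℂ) (z : Fin n → ℂ) (r : ℝ), 0 < r →
    DifferentiableOn ℂ F (closedBall z r) →
    ENNReal.ofReal ‖F z‖ * volume (ball z r) ≤ ∫⁻ w in ball z r, ENNReal.ofReal ‖F w‖ := by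
  intro n
  induction n with
  | zero =>
    intro F z r hr hF
    have hb : ball z r = univ := by
      ext w
      simp [mem_ball, Subsingleton.elim w z, hr]
    rw [hb, Measure.restrict_univ, lintegral_unique]
    exact le_of_eq (congrArg (fun x => ENNReal.ofReal ‖F x‖ * volume (univ : Set (Fin 0 → ℂ)))
      (Subsingleton.elim z _))
  | succ n ih =>
    intro F z r hr hF
    set e := MeasurableEquiv.piFinSuccAbove (fun _ : Fin (n+1) => ℂ) 0 with he
    have hsymm : ∀ p : ℂ × (Fin n → ℂ), e.symm p = Fin.cons p.1 p.2 := by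
      intro p
      show (Fin.insertNthEquiv (fun _ : Fin (n+1) => ℂ) 0) p = Fin.cons p.1 p.2
      simp [Fin.insertNthEquiv, Fin.insertNth_zero']
    set s1 := ball (z 0) r with hs1
    set t1 := ball (Fin.tail z) r with ht1
    have hball : ball z r = e ⁻¹' (s1 ×ˢ t1) := by
      ext x
      simp only [mem_preimage, mem_prod, mem_ball, hs1, ht1]
      rw [dist_pi_lt_iff hr, dist_pi_lt_iff hr, Fin.forall_fin_succ]
      exact Iff.rfl
    have hmp := MeasureTheory.volume_preserving_piFinSuccAbove (fun _ : Fin (n+1) => ℂ) 0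
    have hT : MeasurableSet (s1 ×ˢ t1) := (measurableSet_ball.prod measurableSet_ball)
    have hvol : volume (ball z r) = volume s1 * volume t1 := by
      rw [hball, hmp.measure_preimage hT.nullMeasurableSet, Measure.volume_eq_prod,
        Measure.prod_prod]
    -- continuity of the cons map
    have hk : Continuous (fun p : ℂ × (Fin n → ℂ) => (Fin.cons p.1 p.2 : Fin (n+1) → ℂ)) := by
      refine continuous_pi fun i => ?_
      refine Fin.cases ?_ (fun j => ?_) i
      · simp only [Fin.cons_zero]; exact continuous_fst
      · simp only [Fin.cons_succ]; exact (continuous_apply j).comp continuous_snd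
    have hmapsTo : MapsTo (fun p : ℂ × (Fin n → ℂ) => (Fin.cons p.1 p.2 : Fin (n+1) → ℂ))
        (s1 ×ˢ t1) (closedBall z r) := by
      intro p hp
      refine ball_subset_closedBall ?_
      rw [hball, mem_preimage]
      have : e (Fin.cons p.1 p.2) = p := by rw [← hsymm]; exact e.apply_symm_apply p
      rw [this]; exact hp
    have hlhs : ∫⁻ w in ball z r, ENNReal.ofReal ‖F w‖
        = ∫⁻ p in s1 ×ˢ t1, ENNReal.ofReal ‖F (Fin.cons p.1 p.2)‖ := by
      have himg : e.symm '' (s1 ×ˢ t1) = e ⁻¹' (s1 ×ˢ t1) := by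
        ext x
        constructor
        · rintro ⟨p, hp, rfl⟩
          rwa [mem_preimage, e.apply_symm_apply]
        · intro hx
          exact ⟨e x, hx, e.symm_apply_apply x⟩
      have := (hmp.symm e).setLIntegral_comp_emb
        (MeasurableEquiv.measurableEmbedding e.symm)
        (fun w => ENNReal.ofReal ‖F w‖) (s1 ×ˢ t1)
      rw [himg, ← hball] at this
      rw [← this]
      refine setLIntegral_congr_fun hT (fun p _ => ?_)
      rw [hsymm]
    have haem : AEMeasurable (fun p : ℂ × (Fin n → ℂ) => ENNReal.ofReal ‖F (Fin.cons p.1 p.2)‖)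
        ((volume.restrict s1).prod (volume.restrict t1)) := by
      rw [Measure.prod_restrict]
      refine ContinuousOn.aemeasurable ?_ hT
      exact ENNReal.continuous_ofReal.comp_continuousOn
        ((hF.continuousOn.comp hk.continuousOn hmapsTo).norm)
    have hfub : ∫⁻ p in s1 ×ˢ t1, ENNReal.ofReal ‖F (Fin.cons p.1 p.2)‖
        = ∫⁻ a in s1, ∫⁻ v in t1, ENNReal.ofReal ‖F (Fin.cons a v)‖ := by
      rw [Measure.volume_eq_prod, ← Measure.prod_restrict]
      exact lintegral_prod _ haem
    have ht1top : volume t1 ≠ ⊤ := measure_ball_lt_top.ne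
    -- slice differentiability and inner bound
    have inner_bd : ∀ a ∈ s1,
        ENNReal.ofReal ‖F (Fin.cons a (Fin.tail z))‖ * volume t1
          ≤ ∫⁻ v in t1, ENNReal.ofReal ‖F (Fin.cons a v)‖ := by
      intro a ha
      have hm : Differentiable ℂ (fun v : Fin n → ℂ => (Fin.cons a v : Fin (n+1) → ℂ)) := by
        refine differentiable_pi.2 fun i => ?_
        refine Fin.cases ?_ (fun j => ?_) i
        · simp only [Fin.cons_zero]; exact differentiable_const a
        · simp only [Fin.cons_succ]
          exact (ContinuousLinearMap.proj j : (Fin n → ℂ) →L[ℂ] ℂ).differentiable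
      have hmt : MapsTo (fun v : Fin n → ℂ => (Fin.cons a v : Fin (n+1) → ℂ))
          (closedBall (Fin.tail z) r) (closedBall z r) := by
        intro v hv
        rw [mem_closedBall] at hv ⊢
        rw [dist_pi_le_iff hr.le, Fin.forall_fin_succ]
        constructor
        · simpa using (mem_ball.mp ha).le
        · intro j
          simpa [Fin.tail] using (dist_pi_le_iff hr.le).mp hv j
      exact ih (fun v => F (Fin.cons a v)) (Fin.tail z) r hr
        (hF.comp hm.differentiableOn hmt)
    have step1 : ∫⁻ a in s1, ENNReal.ofReal ‖F (Fin.cons a (Fin.tail z))‖ * volume t1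
        ≤ ∫⁻ a in s1, ∫⁻ v in t1, ENNReal.ofReal ‖F (Fin.cons a v)‖ :=
      setLIntegral_mono_ae' measurableSet_ball (ae_of_all _ inner_bd)
    have step2 : (∫⁻ a in s1, ENNReal.ofReal ‖F (Fin.cons a (Fin.tail z))‖) * volume t1
        = ∫⁻ a in s1, ENNReal.ofReal ‖F (Fin.cons a (Fin.tail z))‖ * volume t1 :=
      (lintegral_mul_const' (volume t1) _ ht1top).symm
    have hslice0 : DifferentiableOn ℂ (fun a : ℂ => F (Fin.cons a (Fin.tail z)))
        (closedBall (z 0) r) := by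
      have hm : Differentiable ℂ (fun a : ℂ => (Fin.cons a (Fin.tail z) : Fin (n+1) → ℂ)) := by
        refine differentiable_pi.2 fun i => ?_
        refine Fin.cases ?_ (fun j => ?_) i
        · simp only [Fin.cons_zero]; exact differentiable_id
        · simp only [Fin.cons_succ]; exact differentiable_const _
      refine hF.comp hm.differentiableOn ?_
      intro a ha
      rw [mem_closedBall] at ha ⊢
      rw [dist_pi_le_iff hr.le, Fin.forall_fin_succ]
      refine ⟨by simpa using ha, fun j => by simp [Fin.tail, hr.le]⟩
    have step3 : ENNReal.ofReal ‖F z‖ * volume s1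
        ≤ ∫⁻ a in s1, ENNReal.ofReal ‖F (Fin.cons a (Fin.tail z))‖ := by
      have := disc_mean (fun a => F (Fin.cons a (Fin.tail z))) (z 0) r hr hslice0
      simp only [Fin.cons_self_tail] at this
      exact this
    calc ENNReal.ofReal ‖F z‖ * volume (ball z r)
        = (ENNReal.ofReal ‖F z‖ * volume s1) * volume t1 := by rw [hvol, mul_assoc]
      _ ≤ (∫⁻ a in s1, ENNReal.ofReal ‖F (Fin.cons a (Fin.tail z))‖) * volume t1 :=
          mul_le_mul_left step3 _
      _ = ∫⁻ a in s1, ENNReal.ofReal ‖F (Fin.cons a (Fin.tail z))‖ * volume t1 := step2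
      _ ≤ ∫⁻ a in s1, ∫⁻ v in t1, ENNReal.ofReal ‖F (Fin.cons a v)‖ := step1
      _ = ∫⁻ w in ball z r, ENNReal.ofReal ‖F w‖ := by rw [hlhs, hfub]

lemma polydisc_mean_sq (n : ℕ) (F : (Fin n → ℂ) → ℂ) (z : Fin n → ℂ) (r : ℝ) (hr : 0 < r)
    (hF : DifferentiableOn ℂ F (closedBall z r)) :
    ENNReal.ofReal (‖F z‖ ^ 2) * volume (ball z r)
      ≤ ∫⁻ w in ball z r, ENNReal.ofReal (‖F w‖ ^ 2) := by
  set V := volume (ball z r) with hV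
  have hV0 : V ≠ 0 := (measure_ball_pos volume z hr).ne'
  have hVt : V ≠ ⊤ := measure_ball_lt_top.ne
  set L := ENNReal.ofReal ‖F z‖ with hL
  set I2 := ∫⁻ w in ball z r, ENNReal.ofReal (‖F w‖ ^ 2) with hI2
  have haem : AEMeasurable (fun w => ENNReal.ofReal ‖F w‖) (volume.restrict (ball z r)) := by
    refine ContinuousOn.aemeasurable ?_ measurableSet_ball
    exact ENNReal.continuous_ofReal.comp_continuousOn
      ((hF.continuousOn.mono ball_subset_closedBall).norm)
  have hconj : Real.HolderConjugate 2 2 := Real.HolderConjugate.two_two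
  have hCS := ENNReal.lintegral_mul_le_Lp_mul_Lq (volume.restrict (ball z r)) hconj haem
    aemeasurable_const (g := fun _ => (1 : ℝ≥0∞))
  simp only [Pi.mul_apply, mul_one, ENNReal.one_rpow] at hCS
  have hone : ∫⁻ _ in ball z r, (1:ℝ≥0∞) = V := by
    rw [lintegral_one, Measure.restrict_apply_univ]
  rw [hone] at hCS
  have hrw : ∀ w, (ENNReal.ofReal ‖F w‖) ^ (2:ℝ) = ENNReal.ofReal (‖F w‖ ^ 2) := by
    intro w
    rw [show (2:ℝ) = ((2:ℕ):ℝ) by norm_num, ENNReal.rpow_natCast,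
      ENNReal.ofReal_pow (norm_nonneg _)]
  simp only [hrw] at hCS
  -- hCS : ∫⁻ ofReal ‖F‖ ≤ I2 ^ (1/2) * V ^ (1/2)
  have hmean := polydisc_mean n F z r hr hF
  have hchain : L * V ≤ I2 ^ (1/2 : ℝ) * V ^ (1/2 : ℝ) := hmean.trans hCS
  have hsq : (L * V) * (L * V) ≤ (I2 ^ (1/2:ℝ) * V ^ (1/2:ℝ)) * (I2 ^ (1/2:ℝ) * V ^ (1/2:ℝ)) :=
    mul_le_mul' hchain hchain
  have hhalf : ∀ x : ℝ≥0∞, x ^ (1/2:ℝ) * x ^ (1/2:ℝ) = x := by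
    intro x
    rw [← ENNReal.rpow_add_of_nonneg _ _ (by norm_num) (by norm_num)]
    norm_num
  have hRHS : (I2 ^ (1/2:ℝ) * V ^ (1/2:ℝ)) * (I2 ^ (1/2:ℝ) * V ^ (1/2:ℝ)) = I2 * V := by
    calc (I2 ^ (1/2:ℝ) * V ^ (1/2:ℝ)) * (I2 ^ (1/2:ℝ) * V ^ (1/2:ℝ))
        = (I2 ^ (1/2:ℝ) * I2 ^ (1/2:ℝ)) * (V ^ (1/2:ℝ) * V ^ (1/2:ℝ)) := by ring
      _ = I2 * V := by rw [hhalf, hhalf]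
  rw [hRHS] at hsq
  have hLHS : (L * V) * (L * V) = (L * L * V) * V := by ring
  rw [hLHS] at hsq
  have hfin : L * L * V ≤ I2 := (ENNReal.mul_le_mul_iff_left hV0 hVt).mp hsq
  have : ENNReal.ofReal (‖F z‖ ^ 2) = L * L := by
    rw [hL, ← ENNReal.ofReal_mul (norm_nonneg _), sq]
  rw [this]
  exact hfin

/-- if `F` is holomorphic on an open set `Ω ⊆ ℂⁿ` and
`∫_Ω |F w|² exp(1/dist(w,∂Ω)) dV ≤ A < ∞` (dV the Lebesgue measure on ℂⁿ), then
`F(z) → 0` as `z → y` within `Ω` for every boundary point `y ∈ ∂Ω`. -/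
theorem stmt5 (n : ℕ) (Ω : Set (Fin n → ℂ)) (hΩ : IsOpen Ω)
    (F : (Fin n → ℂ) → ℂ) (hF : DifferentiableOn ℂ F Ω)
    (A : ENNReal) (hA : A ≠ ⊤)
    (hint : ∫⁻ w in Ω,
        ENNReal.ofReal (‖F w‖ ^ 2 *
          Real.exp (1 / Metric.infDist w (frontier Ω))) ≤ A) :
    ∀ y ∈ frontier Ω, Filter.Tendsto F (nhdsWithin y Ω) (nhds 0) := by
  intro y hy
  have hfr : (frontier Ω).Nonempty := ⟨y, hy⟩
  have hpos : ∀ z ∈ Ω, 0 < Metric.infDist z (frontier Ω) := by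
    intro z hz
    rw [← isClosed_frontier.notMem_iff_infDist_pos hfr]
    intro hmem
    rw [hΩ.frontier_eq] at hmem
    exact hmem.2 hz
  have ball_sub : ∀ z ∈ Ω, ball z (Metric.infDist z (frontier Ω)) ⊆ Ω := by
    intro z hz
    set d := Metric.infDist z (frontier Ω) with hd
    have hdpos : 0 < d := hpos z hz
    refine IsPreconnected.subset_left_of_subset_union (v := interior Ωᶜ) hΩ isOpen_interior ?_ ?_
      ⟨z, mem_ball_self hdpos, hz⟩ (convex_ball z d).isPreconnected
    · rw [Set.disjoint_left]
      intro x hx hx'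
      exact interior_subset hx' hx
    · intro x hx
      by_contra hcon
      simp only [mem_union, not_or] at hcon
      obtain ⟨hx1, hx2⟩ := hcon
      have hclo : x ∈ closure Ω := by
        by_contra hcl
        exact hx2 (by rw [interior_compl]; exact hcl)
      have hxfr : x ∈ frontier Ω := ⟨hclo, by rwa [hΩ.interior_eq]⟩
      have : d ≤ dist z x := Metric.infDist_le_dist_of_mem hxfr
      have hlt : dist z x < d := by rwa [mem_ball, dist_comm] at hx
      linarith
  -- the decay function
  set φ : ℝ → ℝ := fun d =>
    A.toReal / ((Real.pi * (d/2)^2)^n * Real.exp (2/(3*d))) with hφdef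
  -- pointwise bound
  have claim : ∀ z ∈ Ω, ‖F z‖^2 ≤ φ (Metric.infDist z (frontier Ω)) := by
    intro z hz
    set d := Metric.infDist z (frontier Ω) with hd
    have hdpos : 0 < d := hpos z hz
    set r := d/2 with hrdef
    have hr : 0 < r := by positivity
    have hsub2 : closedBall z r ⊆ Ω :=
      (closedBall_subset_ball (by rw [hrdef]; linarith)).trans (ball_sub z hz)
    have hballsub : ball z r ⊆ Ω := ball_subset_closedBall.trans hsub2
    have hFd : DifferentiableOn ℂ F (closedBall z r) := hF.mono hsub2
    have hmean := polydisc_mean_sq n F z r hr hFd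
    have hweight : ∀ w ∈ ball z r,
        ENNReal.ofReal (‖F w‖^2) * ENNReal.ofReal (Real.exp (2/(3*d)))
          ≤ ENNReal.ofReal (‖F w‖ ^ 2 *
              Real.exp (1 / Metric.infDist w (frontier Ω))) := by
      intro w hw
      rw [← ENNReal.ofReal_mul (by positivity)]
      apply ENNReal.ofReal_le_ofReal
      have hwpos : 0 < Metric.infDist w (frontier Ω) := hpos w (hballsub hw)
      have h1 : Metric.infDist w (frontier Ω) ≤ d + r := by
        have := Metric.infDist_le_infDist_add_dist (x := w) (y := z) (s := frontier Ω)
        rw [← hd] at this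
        have h2 : dist w z < r := mem_ball.mp hw
        linarith
      have hexp : Real.exp (2/(3*d)) ≤ Real.exp (1 / Metric.infDist w (frontier Ω)) := by
        apply Real.exp_le_exp.mpr
        have : (1:ℝ)/(d + r) ≤ 1 / Metric.infDist w (frontier Ω) :=
          one_div_le_one_div_of_le hwpos h1
        calc 2/(3*d) = 1/(d + r) := by rw [hrdef]; field_simp; ring
          _ ≤ _ := this
      exact mul_le_mul_of_nonneg_left hexp (by positivity)
    have hchain : ENNReal.ofReal (‖F z‖^2) *
        (volume (ball z r) * ENNReal.ofReal (Real.exp (2/(3*d)))) ≤ A := by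
      rw [← mul_assoc]
      calc ENNReal.ofReal (‖F z‖^2) * volume (ball z r) * ENNReal.ofReal (Real.exp (2/(3*d)))
          ≤ (∫⁻ w in ball z r, ENNReal.ofReal (‖F w‖^2)) * ENNReal.ofReal (Real.exp (2/(3*d))) :=
            mul_le_mul_left hmean _
        _ = ∫⁻ w in ball z r, ENNReal.ofReal (‖F w‖^2) * ENNReal.ofReal (Real.exp (2/(3*d))) :=
            (lintegral_mul_const' _ _ ENNReal.ofReal_ne_top).symm
        _ ≤ ∫⁻ w in ball z r, ENNReal.ofReal (‖F w‖ ^ 2 *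
              Real.exp (1 / Metric.infDist w (frontier Ω))) :=
            setLIntegral_mono_ae' measurableSet_ball (ae_of_all _ hweight)
        _ ≤ ∫⁻ w in Ω, ENNReal.ofReal (‖F w‖ ^ 2 *
              Real.exp (1 / Metric.infDist w (frontier Ω))) :=
            lintegral_mono_set hballsub
        _ ≤ A := hint
    set c := volume (ball z r) * ENNReal.ofReal (Real.exp (2/(3*d))) with hc
    have hc0 : c ≠ 0 := by
      apply mul_ne_zero (measure_ball_pos volume z hr).ne'
      simp [ENNReal.ofReal_eq_zero, not_le, Real.exp_pos]
    have hct : c ≠ ⊤ := ENNReal.mul_ne_top measure_ball_lt_top.ne ENNReal.ofReal_ne_top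
    have hdiv : ENNReal.ofReal (‖F z‖^2) ≤ A / c :=
      (ENNReal.le_div_iff_mul_le (Or.inl hc0) (Or.inl hct)).mpr hchain
    have hAc : A / c ≠ ⊤ := by
      intro htop
      rw [ENNReal.div_eq_top] at htop
      rcases htop with ⟨_, h2⟩ | ⟨h1, _⟩
      · exact hc0 h2
      · exact hA h1
    have hreal : ‖F z‖^2 ≤ (A / c).toReal := by
      have := ENNReal.toReal_mono hAc hdiv
      rwa [ENNReal.toReal_ofReal (by positivity)] at this
    have hcball : (volume (ball z r)).toReal = (Real.pi * (d/2)^2)^n := by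
      rw [volume_pi_ball z hr]
      simp only [Complex.volume_ball]
      rw [Finset.prod_const, Finset.card_univ, Fintype.card_fin]
      rw [ENNReal.toReal_pow, ENNReal.toReal_mul, ENNReal.toReal_pow,
        ENNReal.toReal_ofReal hr.le, ENNReal.coe_toReal, NNReal.coe_real_pi]
      rw [← hrdef]
      ring
    have hcto : c.toReal = (Real.pi * (d/2)^2)^n * Real.exp (2/(3*d)) := by
      rw [hc, ENNReal.toReal_mul, ENNReal.toReal_ofReal (Real.exp_pos _).le, hcball]
    rw [hφdef]
    calc ‖F z‖^2 ≤ (A / c).toReal := hreal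
      _ = A.toReal / c.toReal := ENNReal.toReal_div A c
      _ = A.toReal / ((Real.pi * (d/2)^2)^n * Real.exp (2/(3*d))) := by rw [hcto]
  -- the limit of φ
  have hden : Tendsto (fun d => (Real.pi * (d/2)^2)^n * Real.exp (2/(3*d)))
      (nhdsWithin (0:ℝ) (Ioi 0)) atTop := by
    have h23 : Tendsto (fun d : ℝ => 2/(3*d)) (nhdsWithin (0:ℝ) (Ioi 0)) atTop := by
      have : (fun d : ℝ => 2/(3*d)) = fun d => (2/3) * d⁻¹ := by
        funext d
        rw [div_mul_eq_div_div, div_eq_mul_inv]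
      rw [this]
      exact tendsto_inv_nhdsGT_zero.const_mul_atTop (by norm_num)
    have hcomp := (Real.tendsto_exp_div_pow_atTop (2*n)).comp h23
    have hC : (0:ℝ) < (Real.pi/9)^n := by positivity
    have hmul := hcomp.const_mul_atTop hC
    refine hmul.congr' ?_
    filter_upwards [self_mem_nhdsWithin] with d (hd : d ∈ Ioi 0)
    have hd0 : (0:ℝ) < d := hd
    have ht0 : (0:ℝ) < 2/(3*d) := by positivity
    show (Real.pi/9)^n * (Real.exp (2/(3*d)) / (2/(3*d))^(2*n))
        = (Real.pi * (d/2)^2)^n * Real.exp (2/(3*d))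
    have hkey : (Real.pi * (d/2)^2)^n * (2/(3*d))^(2*n) = (Real.pi/9)^n := by
      rw [pow_mul, ← mul_pow]
      congr 1
      field_simp
      ring
    rw [← hkey]
    field_simp
  have htend : Tendsto φ (nhdsWithin (0:ℝ) (Ioi 0)) (nhds 0) := by
    rw [hφdef]
    exact Filter.Tendsto.div_atTop tendsto_const_nhds hden
  rw [Metric.tendsto_nhdsWithin_nhds]
  intro ε hε
  have hev : {d : ℝ | φ d < ε^2} ∈ nhdsWithin (0:ℝ) (Ioi 0) :=
    Filter.Tendsto.eventually_lt_const (by positivity : (0:ℝ) < ε^2) htend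
  obtain ⟨u, hu, hsubI⟩ := mem_nhdsGT_iff_exists_Ioo_subset.mp hev
  refine ⟨u, hu, ?_⟩
  intro x hx hdist
  have hdx : 0 < Metric.infDist x (frontier Ω) := hpos x hx
  have hdu : Metric.infDist x (frontier Ω) < u :=
    lt_of_le_of_lt (Metric.infDist_le_dist_of_mem hy) hdist
  have hφx : φ (Metric.infDist x (frontier Ω)) < ε^2 := hsubI ⟨hdx, hdu⟩
  have hb := (claim x hx).trans_lt hφx
  rw [dist_zero_right]
  exact lt_of_pow_lt_pow_left₀ 2 hε.le hb
end

section
/- Let U = {z ∈ ℂ : |z| < 1}, n ∈ ℕ, and suppose F is holomorphic on U \ {0} such that both e^{F(z)} and F(z), multiplied by z^n, extend continuously to U (i.e., z^n·e^{F(z)} and z^n·F(z) extend continuously across 0). Writing z^n·e^{F(z)} = A(z) with A holomorphic on U, if A(z) = z^l·A'(z) with 0 ≤ l < n and A'(0) ≠ 0, then a contradiction arises; consequently A vanishes to order at least n at 0 and e^F extends holomorphically to U. -/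
open Complex Metric Set Filter

/-- A continuous integer-valued function on `ℝ` is constant. -/
lemma stmt11_int_const (φ : ℝ → ℝ) (hφ : Continuous φ) (hint : ∀ t, ∃ k : ℤ, φ t = k)
    (a b : ℝ) : φ a = φ b := by
  obtain ⟨k₀, h₀⟩ := hint a
  obtain ⟨k₁, h₁⟩ := hint b
  rw [h₀, h₁]
  norm_cast
  by_contra hk
  have hsub : Set.uIcc (φ a) (φ b) ⊆ φ '' Set.uIcc a b :=
    intermediate_value_uIcc hφ.continuousOn
  set j : ℤ := min k₀ k₁ with hj
  have hv : ((j : ℝ)) + 1/2 ∈ Set.uIcc (φ a) (φ b) := by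
    rw [h₀, h₁, Set.mem_uIcc]
    rcases le_or_gt k₀ k₁ with h | h
    · have h' : (k₀ : ℝ) + 1 ≤ k₁ := by exact_mod_cast (by omega : k₀ + 1 ≤ k₁)
      have hjj : (j : ℝ) = k₀ := by rw [hj, min_eq_left h]
      left; rw [hjj]; constructor <;> linarith
    · have h' : (k₁ : ℝ) + 1 ≤ k₀ := by exact_mod_cast (by omega : k₁ + 1 ≤ k₀)
      have hjj : (j : ℝ) = k₁ := by rw [hj, min_eq_right h.le]
      right; rw [hjj]; constructor <;> linarith
  obtain ⟨t, -, ht⟩ := hsub hv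
  obtain ⟨k, hkt⟩ := hint t
  rw [hkt] at ht
  have h2 : ((2 * k : ℤ) : ℝ) = ((2 * j + 1 : ℤ) : ℝ) := by push_cast; linarith
  have := Int.cast_injective (α := ℝ) h2
  omega

/-- Core monodromy lemma: `e^{F}` cannot equal `z^m A'` with `m < 0` and `A' 0 ≠ 0`. -/
lemma stmt11_core (F : ℂ → ℂ) (hF : DifferentiableOn ℂ F (Metric.ball 0 1 \ {0}))
    (m : ℤ) (hm : m < 0) (A' : ℂ → ℂ) (ε : ℝ) (hε : 0 < ε)
    (hA'c : ContinuousOn A' (Metric.ball 0 ε)) (hA'0 : A' 0 ≠ 0)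
    (heq : ∀ z ∈ Metric.ball (0:ℂ) ε \ {0}, Complex.exp (F z) = z ^ m * A' z) : False := by
  have h0mem : (0:ℂ) ∈ Metric.ball (0:ℂ) ε := by simp [hε]
  have hA'at : ContinuousAt A' 0 := hA'c.continuousAt (isOpen_ball.mem_nhds h0mem)
  have hpos : 0 < ‖A' 0‖ / 2 := by
    have := norm_pos_iff.mpr hA'0
    linarith
  obtain ⟨δ, hδ0, hδ⟩ := Metric.continuousAt_iff.mp hA'at (‖A' 0‖ / 2) hpos
  set r : ℝ := min δ (min ε 1) / 2 with hr_def
  have hr0 : 0 < r := by positivity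
  have hrδ : r < δ := by
    have h1 : min δ (min ε 1) ≤ δ := min_le_left _ _
    have h2 : 0 < min δ (min ε 1) := by positivity
    rw [hr_def]; linarith
  have hrε : r < ε := by
    have h1 : min δ (min ε 1) ≤ ε := le_trans (min_le_right _ _) (min_le_left _ _)
    have h2 : 0 < min δ (min ε 1) := by positivity
    rw [hr_def]; linarith
  have hr1 : r < 1 := by
    have h1 : min δ (min ε 1) ≤ 1 := le_trans (min_le_right _ _) (min_le_right _ _)
    have h2 : 0 < min δ (min ε 1) := by positivity
    rw [hr_def]; linarith
  set c : ℝ → ℂ := circleMap 0 r with hc_def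
  have habs : ∀ t, ‖c t‖ = r := by
    intro t; rw [hc_def, norm_circleMap_zero, abs_of_pos hr0]
  have hcne : ∀ t, c t ≠ 0 := by
    intro t h
    have h2 := habs t
    rw [h] at h2; simp at h2; exact hr0.ne h2
  have hmemε : ∀ t, c t ∈ Metric.ball (0:ℂ) ε \ {0} := fun t =>
    ⟨by rw [mem_ball, dist_zero_right, habs]; exact hrε, hcne t⟩
  have hmem1 : ∀ t, c t ∈ Metric.ball (0:ℂ) 1 \ {0} := fun t =>
    ⟨by rw [mem_ball, dist_zero_right, habs]; exact hr1, hcne t⟩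
  have hclose : ∀ t, dist (A' (c t)) (A' 0) < ‖A' 0‖ / 2 := fun t =>
    hδ (by rw [dist_zero_right, habs]; exact hrδ)
  have hA'ne : ∀ t, A' (c t) ≠ 0 := by
    intro t h
    have h2 := hclose t
    rw [h, dist_comm, dist_zero_right] at h2
    linarith
  have hslit : ∀ t, A' (c t) / A' 0 ∈ Complex.slitPlane := by
    intro t
    have h1 : ‖A' (c t) / A' 0 - 1‖ < 1 := by
      have he : A' (c t) / A' 0 - 1 = (A' (c t) - A' 0) / A' 0 := by field_simp
      rw [he, norm_div, div_lt_one (norm_pos_iff.mpr hA'0)]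
      have h2 := hclose t
      rw [dist_eq_norm] at h2
      linarith
    have h2 := Complex.mem_slitPlane_of_norm_lt_one (z := A' (c t) / A' 0 - 1) h1
    simpa using h2
  set L0 : ℂ := Complex.log (A' 0) with hL0
  set w : ℝ → ℂ := fun t =>
    F (c t) - m * ((Real.log r : ℂ) + t * I) - L0 - Complex.log (A' (c t) / A' 0) with hw
  have hexpc : ∀ t : ℝ, Complex.exp ((Real.log r : ℂ) + t * I) = c t := by
    intro t
    rw [Complex.exp_add, ← Complex.ofReal_exp, Real.exp_log hr0]
    simp [hc_def, circleMap]
  have hone : ∀ t, Complex.exp (w t) = 1 := by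
    intro t
    rw [hw]
    simp only []
    rw [Complex.exp_sub, Complex.exp_sub, Complex.exp_sub, Complex.exp_int_mul, hexpc,
      hL0, Complex.exp_log hA'0, Complex.exp_log (div_ne_zero (hA'ne t) hA'0),
      heq _ (hmemε t)]
    have hzm : (c t) ^ m ≠ 0 := zpow_ne_zero _ (hcne t)
    field_simp [hA'ne t]
  have hint : ∀ t, ∃ k : ℤ, w t = k * (2 * Real.pi * I) := fun t =>
    Complex.exp_eq_one_iff.mp (hone t)
  have h2πI : (2 * (Real.pi : ℂ) * I) ≠ 0 := by
    simp [Real.pi_ne_zero, Complex.I_ne_zero]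
  set φ : ℝ → ℝ := fun t => ((w t) / (2 * Real.pi * I)).re with hφdef
  have hintφ : ∀ t, ∃ k : ℤ, φ t = k := by
    intro t
    obtain ⟨k, hk⟩ := hint t
    refine ⟨k, ?_⟩
    rw [hφdef]
    simp only []
    rw [hk, mul_div_cancel_right₀ _ h2πI, Complex.intCast_re]
  have hcont_c : Continuous c := continuous_circleMap 0 r
  have hcontF : Continuous fun t => F (c t) :=
    hF.continuousOn.comp_continuous hcont_c hmem1
  have hcontA : Continuous fun t => A' (c t) :=
    hA'c.comp_continuous hcont_c fun t => (hmemε t).1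
  have hcontlog : Continuous fun t => Complex.log (A' (c t) / A' 0) := by
    rw [continuous_iff_continuousAt]
    intro t
    exact ((hcontA.continuousAt).div_const _).clog (hslit t)
  have hcontw : Continuous w := by
    apply ((hcontF.sub ?_).sub continuous_const).sub hcontlog
    exact continuous_const.mul
      (continuous_const.add (Complex.continuous_ofReal.mul continuous_const))
  have hφcont : Continuous φ := Complex.continuous_re.comp (hcontw.div_const _)
  have hcper : c (2 * Real.pi) = c 0 := by
    have h := periodic_circleMap 0 r 0
    rw [hc_def]
    simpa using h
  have hwdiff : w (2 * Real.pi) - w 0 = (-m) * (2 * Real.pi * I) := by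
    rw [hw]
    simp only []
    rw [hcper]
    push_cast
    ring
  have hφdiff : φ (2 * Real.pi) - φ 0 = -(m : ℝ) := by
    rw [hφdef]
    simp only []
    rw [← Complex.sub_re, ← sub_div, hwdiff, mul_div_cancel_right₀ _ h2πI]
    simp
  have hconst := stmt11_int_const φ hφcont hintφ (2 * Real.pi) 0
  rw [hconst] at hφdiff
  have hm0 : (m : ℝ) = 0 := by linarith
  exact absurd (by exact_mod_cast hm0 : m = 0) hm.ne

/-- order/monodromy argument in one variable: suppose `F` is holomorphic on
the punctured unit disk `U \ {0}` and both `z^n e^{F z}` and `z^n F z` extend continuously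
across `0`, with `A` holomorphic on `U` agreeing with `z^n e^{F z}` on `U \ {0}`. Then `A`
cannot factor as `A = z^l A'` with `l < n`, `A'` holomorphic, `A' 0 ≠ 0` (so `A` vanishes
to order at least `n` at `0`), and `e^F` extends holomorphically to `U`. -/
theorem stmt11 (n : ℕ) (F : ℂ → ℂ)
    (hF : DifferentiableOn ℂ F (Metric.ball 0 1 \ {0}))
    (A : ℂ → ℂ) (hA : DifferentiableOn ℂ A (Metric.ball 0 1))
    (hAF : ∀ z ∈ Metric.ball (0:ℂ) 1 \ {0}, A z = z ^ n * Complex.exp (F z))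
    (B : ℂ → ℂ) (hB : ContinuousOn B (Metric.ball 0 1))
    (hBF : ∀ z ∈ Metric.ball (0:ℂ) 1 \ {0}, B z = z ^ n * F z) :
    (∀ l : ℕ, l < n → ∀ A' : ℂ → ℂ, DifferentiableOn ℂ A' (Metric.ball 0 1) →
        (∀ z ∈ Metric.ball (0:ℂ) 1, A z = z ^ l * A' z) → A' 0 = 0) ∧
      ∃ g : ℂ → ℂ, DifferentiableOn ℂ g (Metric.ball 0 1) ∧
        ∀ z ∈ Metric.ball (0:ℂ) 1 \ {0}, g z = Complex.exp (F z) := by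
  constructor
  · intro l hl A' hA' hfac
    by_contra hA'0
    have hlm : ((l : ℤ) - n) < 0 := by
      have : (l : ℤ) < n := by exact_mod_cast hl
      omega
    refine stmt11_core F hF ((l:ℤ) - n) hlm A' 1 one_pos hA'.continuousOn hA'0 ?_
    intro z hz
    have h1 := hAF z hz
    have h2 := hfac z hz.1
    have hz0 : z ≠ 0 := hz.2
    rw [zpow_sub₀ hz0, zpow_natCast, zpow_natCast]
    field_simp
    linear_combination h2 - h1
  · have h0b : (0:ℂ) ∈ Metric.ball (0:ℂ) 1 := by simp
    have hAanal : AnalyticAt ℂ A 0 := hA.analyticAt (isOpen_ball.mem_nhds h0b)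
    have hne_top : analyticOrderAt A 0 ≠ ⊤ := by
      intro htop
      have hev := analyticOrderAt_eq_top.mp htop
      rw [Metric.eventually_nhds_iff] at hev
      obtain ⟨ρ, hρ0, hev⟩ := hev
      set z : ℂ := ((min ρ 1 / 2 : ℝ) : ℂ) with hzdef
      have hz0 : z ≠ 0 := by
        rw [hzdef]
        exact_mod_cast Complex.ofReal_ne_zero.mpr (by positivity)
      have habsz : ‖z‖ = min ρ 1 / 2 := by
        rw [hzdef, Complex.norm_real, Real.norm_of_nonneg (by positivity)]
      have hzρ : dist z 0 < ρ := by
        rw [dist_zero_right, habsz]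
        have := min_le_left ρ 1
        linarith
      have hz1 : z ∈ Metric.ball (0:ℂ) 1 := by
        rw [mem_ball, dist_zero_right, habsz]
        have := min_le_right ρ 1
        linarith
      have hz := hev hzρ
      rw [hAF z ⟨hz1, hz0⟩] at hz
      exact (mul_ne_zero (pow_ne_zero _ hz0) (Complex.exp_ne_zero _)) hz
    set m := (analyticOrderAt A 0).toNat with hmdef
    have horder : analyticOrderAt A 0 = m := (ENat.coe_toNat hne_top).symm
    obtain ⟨A', hA'anal, hA'0, hAeq⟩ := hAanal.analyticOrderAt_eq_natCast.mp horder
    simp only [sub_zero, smul_eq_mul] at hAeq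
    have hmn : n ≤ m := by
      by_contra hlt
      push_neg at hlt
      have hev : ∀ᶠ z in nhds (0:ℂ), A z = z ^ m * A' z ∧ AnalyticAt ℂ A' z :=
        hAeq.and hA'anal.eventually_analyticAt
      rw [Metric.eventually_nhds_iff] at hev
      obtain ⟨ρ, hρ0, hev⟩ := hev
      have hmn' : ((m : ℤ) - n) < 0 := by
        have : (m : ℤ) < n := by exact_mod_cast hlt
        omega
      refine stmt11_core F hF ((m:ℤ) - n) hmn' A' (min ρ 1) (by positivity) ?_ hA'0 ?_
      · intro z hz
        have hd : dist z 0 < ρ := lt_of_lt_of_le (mem_ball.mp hz) (min_le_left _ _)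
        exact ((hev hd).2).continuousAt.continuousWithinAt
      · intro z hz
        obtain ⟨hzb, hz0'⟩ := hz
        have hz0 : z ≠ 0 := hz0'
        have hdρ : dist z 0 < ρ := lt_of_lt_of_le (mem_ball.mp hzb) (min_le_left _ _)
        have hd1 : z ∈ Metric.ball (0:ℂ) 1 :=
          mem_ball.mpr (lt_of_lt_of_le (mem_ball.mp hzb) (min_le_right _ _))
        have h1 := hAF z ⟨hd1, hz0⟩
        have h2 := (hev hdρ).1
        rw [zpow_sub₀ hz0, zpow_natCast, zpow_natCast]
        field_simp
        linear_combination h2 - h1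
    refine ⟨fun z => if z = 0 then (0:ℂ) ^ (m - n) * A' 0 else A z / z ^ n, ?_, ?_⟩
    · intro z hz
      rcases eq_or_ne z 0 with rfl | hz0
      · apply DifferentiableAt.differentiableWithinAt
        have hφ : DifferentiableAt ℂ (fun w : ℂ => w ^ (m - n) * A' w) 0 :=
          (differentiableAt_pow _).mul hA'anal.differentiableAt
        apply hφ.congr_of_eventuallyEq
        filter_upwards [hAeq] with w hw
        by_cases hw0 : w = 0
        · subst hw0; simp
        · rw [if_neg hw0, hw, div_eq_iff (pow_ne_zero n hw0), mul_right_comm,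
            ← pow_add, Nat.sub_add_cancel hmn]
      · apply DifferentiableAt.differentiableWithinAt
        have hd : DifferentiableAt ℂ (fun w => A w / w ^ n) z :=
          (hA.differentiableAt (isOpen_ball.mem_nhds hz)).div (differentiableAt_pow _)
            (pow_ne_zero _ hz0)
        apply hd.congr_of_eventuallyEq
        filter_upwards [isOpen_compl_singleton.mem_nhds hz0] with w hw
        simp only [Set.mem_compl_iff, Set.mem_singleton_iff] at hw
        rw [if_neg hw]
    · intro z hz
      have hz0 : z ≠ 0 := hz.2
      simp only [if_neg hz0]
      rw [hAF z hz, mul_comm, mul_div_assoc, div_self (pow_ne_zero n hz0), mul_one]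
end
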